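/- Let d ≤ e < f be integers with d + e + f = 0, and assume k > e. Suppose val(α) = d, val(β) ≥ d, and val(α·γ − β·ε^j) = d + e. Then: val(a) = d − j < 0; val(c) = e − k < 0; val(b) = i − f and val(b) < val(a); and val(b − a·c) = d + e − 2k, which is strictly less than val(c). -/

import Mathlib

noncomputable section

/-- The ε-adic valuation on `L = k̄((ε))`, with `val 0 = ∞`. -/
def val {K : Type*} [Field K] (x : LaurentSeries K) : WithTop ℤ := x.orderTop

/-- The uniformizer ε of the Laurent series field. -/
def eps (K : Type*) [Field K] : LaurentSeries K := HahnSeries.single 1 1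

/-- `σ : L → L` is the Frobenius automorphism: it fixes ε and raises each Laurent-series
coefficient to the `q`-th power.  (This property determines `σ` uniquely.) -/
def IsFrobenius (K : Type*) [Field K] (q : ℕ)
    (σ : LaurentSeries K → LaurentSeries K) : Prop :=
  ∀ (x : LaurentSeries K) (n : ℤ), (σ x).coeff n = (x.coeff n) ^ q

namespace Aux

variable {K : Type*} [Field K]

lemma val_eq_top_iff {x : LaurentSeries K} : val x = ⊤ ↔ x = 0 :=
  HahnSeries.orderTop_eq_top

lemma val_mul (x y : LaurentSeries K) : val (x * y) = val x + val y := by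
  by_cases hx : x = 0
  · simp [val, hx]
  by_cases hy : y = 0
  · simp [val, hy]
  rw [val, val, val, ← HahnSeries.order_eq_orderTop_of_ne_zero hx,
    ← HahnSeries.order_eq_orderTop_of_ne_zero hy,
    ← HahnSeries.order_eq_orderTop_of_ne_zero (mul_ne_zero hx hy),
    HahnSeries.order_mul hx hy, WithTop.coe_add]

lemma val_eps_zpow (n : ℤ) : val (eps K ^ n) = (n : WithTop ℤ) := by
  rw [eps, ← RatFunc.single_zpow, val, HahnSeries.orderTop_single one_ne_zero]

lemma orderTop_le_orderTop {x y : LaurentSeries K}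
    (h : ∀ n : ℤ, y.coeff n ≠ 0 → x.coeff n ≠ 0) : x.orderTop ≤ y.orderTop := by
  by_cases hy : y = 0
  · simp [hy]
  · obtain ⟨g, hg⟩ := WithTop.ne_top_iff_exists.mp (HahnSeries.orderTop_ne_top.mpr hy)
    rw [← hg]
    exact HahnSeries.orderTop_le_of_coeff_ne_zero
      (h g (HahnSeries.coeff_orderTop_ne hg.symm))

lemma val_sub_right {x y : LaurentSeries K} (h : val y < val x) :
    val (x - y) = val y := by
  have : x - y = -(y - x) := by ring
  rw [val, this, HahnSeries.orderTop_neg, HahnSeries.orderTop_sub h]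
  rfl

lemma val_sub_left {x y : LaurentSeries K} (h : val x < val y) :
    val (x - y) = val x := HahnSeries.orderTop_sub h

end Aux

open Aux

/-- the case `k > e` for `x = ε^{(d,e,f)}s_2s_1`, `d ≤ e < f`: under the
stated valuation conditions on `α`, `β` and `αγ − βε^j`, one has `val(a) = d − j < 0`,
`val(c) = e − k < 0`, `val(b) = i − f` with `val(b) < val(a)`, and
`val(b − ac) = d + e − 2k < val(c)`. -/
theorem case_d_min_k_gt_e_valuations (F : Type*) [Field F] [Fintype F]
    (σ : LaurentSeries (AlgebraicClosure F) → LaurentSeries (AlgebraicClosure F))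
    (hσ : IsFrobenius (AlgebraicClosure F) (Fintype.card F) σ)
    (a b c : LaurentSeries (AlgebraicClosure F))
    (i j k : ℤ) (hij : j < i) (hjk : k < j) (hijk : i + j + k = 0)
    (d e f : ℤ) (hde : d ≤ e) (hef : e < f) (hdef : d + e + f = 0)
    (hke : e < k)
    (α β γ : LaurentSeries (AlgebraicClosure F))
    (hα : α = eps (AlgebraicClosure F) ^ i * σ a - eps (AlgebraicClosure F) ^ j * a)
    (hβ : β = eps (AlgebraicClosure F) ^ i * σ b - eps (AlgebraicClosure F) ^ k * b -
      a * (eps (AlgebraicClosure F) ^ j * σ c - eps (AlgebraicClosure F) ^ k * c))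
    (hγ : γ = eps (AlgebraicClosure F) ^ j * σ c - eps (AlgebraicClosure F) ^ k * c)
    (hvα : val α = (d : WithTop ℤ))
    (hvβ : (d : WithTop ℤ) ≤ val β)
    (hminor : val (α * γ - β * eps (AlgebraicClosure F) ^ j) = ((d + e : ℤ) : WithTop ℤ)) :
    val a = ((d - j : ℤ) : WithTop ℤ) ∧ d - j < 0 ∧
    val c = ((e - k : ℤ) : WithTop ℤ) ∧ e - k < 0 ∧
    val b = ((i - f : ℤ) : WithTop ℤ) ∧ val b < val a ∧
    val (b - a * c) = ((d + e - 2 * k : ℤ) : WithTop ℤ) ∧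
    val (b - a * c) < val c := by
  set K := AlgebraicClosure F
  set q := Fintype.card F with hqdef
  have hq0 : q ≠ 0 := Fintype.card_ne_zero
  -- characteristic and Frobenius ring hom
  set p := ringChar F with hpdef
  obtain ⟨m, hp, hcard⟩ := FiniteField.card F p
  haveI : Fact p.Prime := ⟨hp⟩
  haveI hKp : CharP K p := charP_of_injective_algebraMap (algebraMap F K).injective p
  set φ : K →+* K := iterateFrobenius K p m with hφdef
  have hφ : ∀ x : K, φ x = x ^ q := fun x => by
    rw [hφdef, iterateFrobenius_def, ← hcard]
  -- σ is coefficientwise application of φ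
  have hmapA : ∀ x : LaurentSeries K, σ x = x.map φ.toAddMonoidHom := by
    intro x; ext n
    simp [hσ x n, hφ]
  have hmapM : ∀ x : LaurentSeries K, σ x = x.map φ.toNonUnitalRingHom := by
    intro x; ext n
    simp only [HahnSeries.map_coeff, hσ x n]
    exact (hφ _).symm
  have hsub : ∀ x y : LaurentSeries K, σ (x - y) = σ x - σ y := by
    intro x y
    rw [hmapA, hmapA, hmapA, HahnSeries.map_sub]
  have hmul : ∀ x y : LaurentSeries K, σ (x * y) = σ x * σ y := by
    intro x y
    rw [hmapM, hmapM, hmapM, HahnSeries.map_mul]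
  have hσ0 : σ 0 = 0 := by
    ext n
    simp [hσ 0 n, zero_pow hq0]
  have hvσ : ∀ x : LaurentSeries K, val (σ x) = val x := by
    intro x
    refine le_antisymm (orderTop_le_orderTop fun n hn => ?_)
      (orderTop_le_orderTop fun n hn => ?_)
    · rw [hσ x n]; exact pow_ne_zero _ hn
    · rw [hσ x n] at hn
      intro h0; exact hn (by rw [h0, zero_pow hq0])
  -- key valuation of combinations ε^m σu − ε^n u
  have hcomb : ∀ (m' n' : ℤ) (u : LaurentSeries K), n' < m' → u ≠ 0 →
      val (eps K ^ m' * σ u - eps K ^ n' * u) = ((n' : WithTop ℤ) + val u) := by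
    intro m' n' u hnm hu
    obtain ⟨v, hv⟩ := WithTop.ne_top_iff_exists.mp (fun h => hu (val_eq_top_iff.mp h))
    have h1 : val (eps K ^ n' * u) = ((n' + v : ℤ) : WithTop ℤ) := by
      rw [val_mul, val_eps_zpow, ← hv]; exact_mod_cast rfl
    have h2 : val (eps K ^ m' * σ u) = ((m' + v : ℤ) : WithTop ℤ) := by
      rw [val_mul, val_eps_zpow, hvσ, ← hv]; exact_mod_cast rfl
    rw [val_sub_right (by rw [h1, h2]; exact_mod_cast (by omega : n' + v < m' + v)), h1, ← hv]
    exact_mod_cast rfl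
  -- val a
  have ha0 : a ≠ 0 := by
    intro h
    rw [h, hσ0, mul_zero, mul_zero, sub_zero] at hα
    rw [hα, val_eq_top_iff.mpr rfl] at hvα
    exact (WithTop.coe_ne_top hvα.symm).elim
  obtain ⟨va, hva⟩ := WithTop.ne_top_iff_exists.mp
    (fun h => ha0 (val_eq_top_iff.mp h))
  have hvala : val α = ((j + va : ℤ) : WithTop ℤ) := by
    rw [hα, hcomb i j a hij ha0, ← hva]; exact_mod_cast rfl
  have hvaeq : va = d - j := by
    rw [hvala] at hvα
    have : j + va = d := by exact_mod_cast hvα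
    omega
  have goal1 : val a = ((d - j : ℤ) : WithTop ℤ) := by rw [← hva, hvaeq]
  have goal2 : d - j < 0 := by omega
  -- val (α * γ) = d + e
  have hβj : ((d + e : ℤ) : WithTop ℤ) < val (β * eps K ^ j) := by
    rw [val_mul, val_eps_zpow]
    calc ((d + e : ℤ) : WithTop ℤ) < ((d + j : ℤ) : WithTop ℤ) := by
          exact_mod_cast (by omega : d + e < d + j)
      _ = (d : WithTop ℤ) + (j : WithTop ℤ) := by exact_mod_cast rfl
      _ ≤ val β + (j : WithTop ℤ) := by
          exact add_le_add_left hvβ _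
  have hvαγ : val (α * γ) = ((d + e : ℤ) : WithTop ℤ) := by
    rcases lt_trichotomy (val (α * γ)) ((d + e : ℤ) : WithTop ℤ) with h | h | h
    · exfalso
      rw [val_sub_left (lt_trans h hβj)] at hminor
      exact absurd (hminor ▸ h) (lt_irrefl _)
    · exact h
    · exfalso
      have hmin : ((d + e : ℤ) : WithTop ℤ) < min (val (α * γ)) (val (β * eps K ^ j)) :=
        lt_min h hβj
      have := HahnSeries.min_orderTop_le_orderTop_sub
        (x := α * γ) (y := β * eps K ^ j)
      rw [show (α * γ).orderTop = val (α * γ) from rfl,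
        show (β * eps K ^ j).orderTop = val (β * eps K ^ j) from rfl,
        show (α * γ - β * eps K ^ j).orderTop = val (α * γ - β * eps K ^ j) from rfl,
        hminor] at this
      exact absurd (lt_of_lt_of_le hmin this) (lt_irrefl _)
  -- val γ = e
  have hγ0 : γ ≠ 0 := by
    intro h
    rw [h, mul_zero, val_eq_top_iff.mpr rfl] at hvαγ
    exact WithTop.coe_ne_top hvαγ.symm
  obtain ⟨vg, hvg⟩ := WithTop.ne_top_iff_exists.mp (fun h => hγ0 (val_eq_top_iff.mp h))
  have hvgeq : vg = e := by
    rw [val_mul, hvα, ← hvg] at hvαγ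
    have : d + vg = d + e := by exact_mod_cast hvαγ
    omega
  -- val c = e - k
  have hc0 : c ≠ 0 := by
    intro h
    rw [h, hσ0, mul_zero, mul_zero, sub_zero] at hγ
    exact hγ0 hγ
  obtain ⟨vc, hvc⟩ := WithTop.ne_top_iff_exists.mp (fun h => hc0 (val_eq_top_iff.mp h))
  have hvceq : vc = e - k := by
    have h1 : val γ = ((k + vc : ℤ) : WithTop ℤ) := by
      rw [hγ, hcomb j k c hjk hc0, ← hvc]; exact_mod_cast rfl
    rw [h1] at hvg
    have h2 : (vg : WithTop ℤ) = ((k + vc : ℤ) : WithTop ℤ) := by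
      rw [hvg]
    have : vg = k + vc := by exact_mod_cast h2
    omega
  have goal3 : val c = ((e - k : ℤ) : WithTop ℤ) := by rw [← hvc, hvceq]
  have goal4 : e - k < 0 := by omega
  -- val b
  have haγ : val (a * γ) = ((d + e - j : ℤ) : WithTop ℤ) := by
    rw [val_mul, ← hva, hvaeq, ← hvg, hvgeq]
    exact_mod_cast (by ring_nf : ((d - j + e : ℤ) : WithTop ℤ) = ((d + e - j : ℤ) : WithTop ℤ))
  have haγβ : val (a * γ) < val β := by
    rw [haγ]
    exact lt_of_lt_of_le (lt_of_lt_of_le (by exact_mod_cast (by omega : d + e - j < d)) le_rfl) hvβ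
  have hXb : eps K ^ i * σ b - eps K ^ k * b = β + a * γ := by
    rw [hβ, hγ]; ring
  have hvX : val (eps K ^ i * σ b - eps K ^ k * b) = ((d + e - j : ℤ) : WithTop ℤ) := by
    rw [hXb, ← haγ]
    exact HahnSeries.orderTop_add_eq_right haγβ
  have hb0 : b ≠ 0 := by
    intro h
    rw [h, hσ0, mul_zero, mul_zero, sub_zero, val_eq_top_iff.mpr rfl] at hvX
    exact WithTop.coe_ne_top hvX.symm
  obtain ⟨vb, hvb⟩ := WithTop.ne_top_iff_exists.mp (fun h => hb0 (val_eq_top_iff.mp h))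
  have hvbeq : vb = d + e - j - k := by
    rw [hcomb i k b (lt_trans hjk hij) hb0, ← hvb] at hvX
    have : k + vb = d + e - j := by exact_mod_cast hvX
    omega
  have goal5 : val b = ((i - f : ℤ) : WithTop ℤ) := by
    rw [← hvb, hvbeq, show (d + e - j - k : ℤ) = i - f from by omega]
  have goal6 : val b < val a := by
    rw [goal5, goal1]
    exact_mod_cast (by omega : i - f < d - j)
  -- val (b - a c)
  have hσu : σ (b - a * c) = σ b - σ a * σ c := by rw [hsub, hmul]
  have hid : eps K ^ i * σ (b - a * c) - eps K ^ k * (b - a * c) = β - α * σ c := by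
    rw [hσu, hα, hβ]; ring
  have hvmul1 : val (α * σ c) = ((d + e - k : ℤ) : WithTop ℤ) := by
    rw [val_mul, hvα, hvσ, ← hvc, hvceq, ← WithTop.coe_add]
    exact congrArg _ (by omega)
  have hvmul2 : val (α * σ c) < val β := by
    rw [hvmul1]
    exact lt_of_lt_of_le (by exact_mod_cast (show d + e - k < d by omega)) hvβ
  have hvrhs : val (β - α * σ c) = ((d + e - k : ℤ) : WithTop ℤ) := by
    rw [val_sub_right hvmul2, hvmul1]
  have hu0 : b - a * c ≠ 0 := by
    intro h
    rw [h, hσ0, mul_zero, mul_zero, sub_zero] at hid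
    rw [← hid, val_eq_top_iff.mpr rfl] at hvrhs
    exact WithTop.coe_ne_top hvrhs.symm
  obtain ⟨vu, hvu⟩ := WithTop.ne_top_iff_exists.mp (fun h => hu0 (val_eq_top_iff.mp h))
  have hvueq : vu = d + e - 2 * k := by
    have := hcomb i k (b - a * c) (lt_trans hjk hij) hu0
    rw [hid, hvrhs, ← hvu] at this
    have h2 : d + e - k = k + vu := by exact_mod_cast this
    omega
  have goal7 : val (b - a * c) = ((d + e - 2 * k : ℤ) : WithTop ℤ) := by
    rw [← hvu, hvueq]
  have goal8 : val (b - a * c) < val c := by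
    rw [goal7, goal3]
    exact_mod_cast (by omega : d + e - 2 * k < e - k)
  exact ⟨goal1, goal2, goal3, goal4, goal5, goal6, goal7, goal8⟩
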